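/- Let Σ be an n×n symmetric positive definite real matrix, X an n×p real matrix of full column rank p with n > p, and W an n×(n−p) real matrix satisfying WᵀW = I_{n−p} and XᵀW = 0. For z ∈ ℝⁿ, let β̂ = (XᵀΣ⁻¹X)⁻¹XᵀΣ⁻¹z be the generalized least squares estimate and S² = (z − Xβ̂)ᵀΣ⁻¹(z − Xβ̂). Then zᵀW(WᵀΣW)⁻¹Wᵀz = S². -/

import Mathlib

open Matrix

section helpers
variable {n m : ℕ}

lemma posdef_conj {A : Matrix (Fin n) (Fin n) ℝ} (hA : A.PosDef)
    (B : Matrix (Fin n) (Fin m) ℝ) (hB : ∀ x : Fin m → ℝ, x ≠ 0 → B *ᵥ x ≠ 0) :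
    (Bᵀ * A * B).PosDef := by
  refine PosDef.of_dotProduct_mulVec_pos ?_ (fun x hx => ?_)
  · have := isHermitian_conjTranspose_mul_mul B hA.isHermitian
    simpa using this
  · have h := hA.dotProduct_mulVec_pos (hB x hx)
    have hrw : (Bᵀ * A * B) *ᵥ x = Bᵀ *ᵥ (A *ᵥ (B *ᵥ x)) := by
      simp [mulVec_mulVec, Matrix.mul_assoc]
    rw [hrw, star_trivial, dotProduct_mulVec, vecMul_transpose]
    simpa [star_trivial] using h
end helpers

theorem stmt_9 (n p : ℕ) (hnp : p < n)
    (S : Matrix (Fin n) (Fin n) ℝ) (hS : S.PosDef)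
    (X : Matrix (Fin n) (Fin p) ℝ) (hX : X.rank = p)
    (W : Matrix (Fin n) (Fin (n - p)) ℝ) (hW : Wᵀ * W = 1) (hXW : Xᵀ * W = 0)
    (z : Fin n → ℝ) (βh : Fin p → ℝ)
    (hβ : βh = ((Xᵀ * S⁻¹ * X)⁻¹ * Xᵀ * S⁻¹) *ᵥ z)
    (S2 : ℝ) (hS2 : S2 = (z - X *ᵥ βh) ⬝ᵥ (S⁻¹ *ᵥ (z - X *ᵥ βh))) :
    z ⬝ᵥ ((W * (Wᵀ * S * W)⁻¹ * Wᵀ) *ᵥ z) = S2 := by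
  have hXinj : ∀ x : Fin p → ℝ, x ≠ 0 → X *ᵥ x ≠ 0 := by
    have hker : LinearMap.ker X.mulVecLin = ⊥ := by
      have h1 := LinearMap.finrank_range_add_finrank_ker X.mulVecLin
      rw [← Matrix.rank, hX] at h1
      simp only [Module.finrank_pi, Fintype.card_fin] at h1
      have : Module.finrank ℝ (LinearMap.ker X.mulVecLin) = 0 := by omega
      exact Submodule.finrank_eq_zero.mp this
    intro x hx h
    exact hx (by simpa [LinearMap.ker_eq_bot'] using (LinearMap.ker_eq_bot'.mp hker) x h)
  have hWinj : ∀ x : Fin (n-p) → ℝ, x ≠ 0 → W *ᵥ x ≠ 0 := by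
    intro x hx h
    apply hx
    have : Wᵀ *ᵥ (W *ᵥ x) = x := by rw [mulVec_mulVec, hW, one_mulVec]
    rw [h, mulVec_zero] at this; exact this.symm
  have hSi : (S⁻¹).PosDef := hS.inv
  set A := Xᵀ * S⁻¹ * X with hAdef
  set C := Wᵀ * S * W with hCdef
  have hApd : A.PosDef := posdef_conj hSi X hXinj
  have hCpd : C.PosDef := posdef_conj hS W hWinj
  have hSinv : S⁻¹ * S = 1 := nonsing_inv_mul S (isUnit_iff_ne_zero.mpr hS.det_pos.ne')
  have hAinv : A⁻¹ * A = 1 := nonsing_inv_mul A (isUnit_iff_ne_zero.mpr hApd.det_pos.ne')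
  have hAinv' : A * A⁻¹ = 1 := mul_nonsing_inv A (isUnit_iff_ne_zero.mpr hApd.det_pos.ne')
  have hCinv : C⁻¹ * C = 1 := nonsing_inv_mul C (isUnit_iff_ne_zero.mpr hCpd.det_pos.ne')
  have hWX : Wᵀ * X = 0 := by
    have := congrArg Matrix.transpose hXW
    simpa using this
  -- the block matrix M and its inverse L
  set M : Matrix (Fin n) (Fin p ⊕ Fin (n - p)) ℝ := fromCols X (S * W) with hMdef
  set L : Matrix (Fin p ⊕ Fin (n - p)) (Fin n) ℝ :=
    fromRows (A⁻¹ * Xᵀ * S⁻¹) (C⁻¹ * Wᵀ) with hLdef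
  have hLM : L * M = 1 := by
    have b11 : A⁻¹ * Xᵀ * S⁻¹ * X = 1 := by
      calc A⁻¹ * Xᵀ * S⁻¹ * X = A⁻¹ * (Xᵀ * S⁻¹ * X) := by
            simp [Matrix.mul_assoc]
        _ = 1 := by rw [← hAdef, hAinv]
    have b12 : A⁻¹ * Xᵀ * S⁻¹ * (S * W) = 0 := by
      calc A⁻¹ * Xᵀ * S⁻¹ * (S * W) = A⁻¹ * (Xᵀ * ((S⁻¹ * S) * W)) := by
            simp [Matrix.mul_assoc]
        _ = 0 := by rw [hSinv, Matrix.one_mul, hXW, Matrix.mul_zero]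
    have b21 : C⁻¹ * Wᵀ * X = 0 := by rw [Matrix.mul_assoc, hWX, Matrix.mul_zero]
    have b22 : C⁻¹ * Wᵀ * (S * W) = 1 := by
      calc C⁻¹ * Wᵀ * (S * W) = C⁻¹ * (Wᵀ * S * W) := by simp [Matrix.mul_assoc]
        _ = 1 := by rw [← hCdef, hCinv]
    rw [hLdef, hMdef, fromRows_mul_fromCols, b11, b12, b21, b22, fromBlocks_one]
  have e : (Fin p ⊕ Fin (n - p)) ≃ Fin n :=
    finSumFinEquiv.trans (finCongr (Nat.add_sub_cancel' hnp.le))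
  have hML : M * L = 1 := (mul_eq_one_comm_of_equiv (A := L) (B := M) e).mp hLM
  -- key identity
  set Q : Matrix (Fin n) (Fin n) ℝ :=
    S * (W * C⁻¹ * Wᵀ) + X * A⁻¹ * (Xᵀ * S⁻¹) with hQdef
  have hQM : Q * M = M := by
    rw [hQdef, hMdef, Matrix.add_mul, mul_fromCols, mul_fromCols]
    have h11 : S * (W * C⁻¹ * Wᵀ) * X = 0 := by
      calc S * (W * C⁻¹ * Wᵀ) * X = S * (W * (C⁻¹ * (Wᵀ * X))) := by
            simp [Matrix.mul_assoc]
        _ = 0 := by rw [hWX, Matrix.mul_zero, Matrix.mul_zero, Matrix.mul_zero]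
    have h12 : X * A⁻¹ * (Xᵀ * S⁻¹) * X = X := by
      calc X * A⁻¹ * (Xᵀ * S⁻¹) * X = X * (A⁻¹ * (Xᵀ * S⁻¹ * X)) := by
            simp [Matrix.mul_assoc]
        _ = X := by rw [← hAdef, hAinv, Matrix.mul_one]
    have h21 : S * (W * C⁻¹ * Wᵀ) * (S * W) = S * W := by
      calc S * (W * C⁻¹ * Wᵀ) * (S * W) = S * (W * (C⁻¹ * (Wᵀ * S * W))) := by
            simp [Matrix.mul_assoc]
        _ = S * W := by rw [← hCdef, hCinv, Matrix.mul_one]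
    have h22 : X * A⁻¹ * (Xᵀ * S⁻¹) * (S * W) = 0 := by
      calc X * A⁻¹ * (Xᵀ * S⁻¹) * (S * W) = X * A⁻¹ * (Xᵀ * ((S⁻¹ * S) * W)) := by
            simp [Matrix.mul_assoc]
        _ = 0 := by rw [hSinv, Matrix.one_mul, hXW, Matrix.mul_zero]
    rw [h11, h12, h21, h22]
    ext i j
    cases j <;> simp [fromCols]
  have hQ1 : Q = 1 := by
    calc Q = Q * (M * L) := by rw [hML, Matrix.mul_one]
      _ = (Q * M) * L := by rw [Matrix.mul_assoc]
      _ = M * L := by rw [hQM]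
      _ = 1 := hML
  have hB : W * C⁻¹ * Wᵀ = S⁻¹ - S⁻¹ * (X * A⁻¹ * (Xᵀ * S⁻¹)) := by
    have h2 : S⁻¹ * (S * (W * C⁻¹ * Wᵀ)) + S⁻¹ * (X * A⁻¹ * (Xᵀ * S⁻¹)) = S⁻¹ * 1 := by
      rw [← Matrix.mul_add, ← hQdef, hQ1]
    rw [← Matrix.mul_assoc, hSinv, Matrix.one_mul, Matrix.mul_one] at h2
    exact eq_sub_of_add_eq h2
  -- scalar computation
  have hSit : (S⁻¹)ᵀ = S⁻¹ := by
    have := hSi.isHermitian.eq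
    simpa using this
  have hsymm : ∀ a b : Fin n → ℝ, a ⬝ᵥ (S⁻¹ *ᵥ b) = b ⬝ᵥ (S⁻¹ *ᵥ a) := by
    intro a b
    rw [dotProduct_mulVec, ← hSit, vecMul_transpose, hSit, dotProduct_comm]
  have hXdot : ∀ (b : Fin p → ℝ) (w : Fin n → ℝ), (X *ᵥ b) ⬝ᵥ w = b ⬝ᵥ (Xᵀ *ᵥ w) := by
    intro b w
    rw [dotProduct_comm, dotProduct_mulVec, ← mulVec_transpose, dotProduct_comm]
  set u := S⁻¹ *ᵥ z with hu
  set v := X *ᵥ βh with hv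
  have hkey2 : Xᵀ *ᵥ (S⁻¹ *ᵥ v) = Xᵀ *ᵥ u := by
    rw [hv, hβ, hu]
    simp only [mulVec_mulVec]
    have heq : Xᵀ * (S⁻¹ * (X * (A⁻¹ * Xᵀ * S⁻¹))) = Xᵀ * S⁻¹ := by
      calc Xᵀ * (S⁻¹ * (X * (A⁻¹ * Xᵀ * S⁻¹))) = (A * A⁻¹) * (Xᵀ * S⁻¹) := by
            rw [hAdef]; simp [Matrix.mul_assoc]
        _ = Xᵀ * S⁻¹ := by rw [hAinv', Matrix.one_mul]
    rw [heq]
  have hvSv : v ⬝ᵥ (S⁻¹ *ᵥ v) = v ⬝ᵥ u := by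
    rw [hv, hXdot, hXdot, ← hv, hkey2]
  have hzSv : z ⬝ᵥ (S⁻¹ *ᵥ v) = v ⬝ᵥ u := by rw [hsymm, ← hu]
  have hlhs : (S⁻¹ * (X * A⁻¹ * (Xᵀ * S⁻¹))) *ᵥ z = S⁻¹ *ᵥ v := by
    rw [hv, hβ]
    simp [mulVec_mulVec, Matrix.mul_assoc]
  rw [hB, hS2, Matrix.sub_mulVec, hlhs]
  have expand : (z - v) ⬝ᵥ (S⁻¹ *ᵥ (z - v))
      = z ⬝ᵥ u - z ⬝ᵥ (S⁻¹ *ᵥ v) - (v ⬝ᵥ u - v ⬝ᵥ (S⁻¹ *ᵥ v)) := by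
    rw [mulVec_sub, sub_dotProduct, dotProduct_sub, dotProduct_sub, ← hu]
  rw [dotProduct_sub, ← hu, hzSv, expand, hvSv, hzSv]
  ring
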